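/- Let k ≥ 3 be an integer. The generalized Cantor function g_k is continuous on [0,1]. -/

import Mathlib

open scoped ENNReal

/-- The `k`-transformation `x ↦ k·x mod 1`. -/
noncomputable def Tmap (k : ℕ) (x : ℝ) : ℝ := Int.fract ((k : ℝ) * x)

/-- The survivor set of the `k`-transformation with hole `(a,b)`. -/
def W (k : ℕ) (a b : ℝ) : Set ℝ :=
  {x | x ∈ Set.Ico (0 : ℝ) 1 ∧ ∀ n : ℕ, (Tmap k)^[n] x ∉ Set.Ioo a b}

/-- The generalized Cantor set `C_k`. -/
def Ck (k : ℕ) : Set ℝ :=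
  {x | ∃ a : ℕ → ℕ, (∀ n, a n = 0 ∨ a n = k - 1) ∧
    x = ∑' n : ℕ, (a n : ℝ) / (k : ℝ) ^ (n + 1)}

/-- The `n`-th `k`-ary digit of `x`. -/
noncomputable def digit (k : ℕ) (n : ℕ) (x : ℝ) : ℤ :=
  ⌊(k : ℝ) ^ (n + 1) * x⌋ % (k : ℤ)

open Classical in
/-- The generalized Cantor function `g_k`. -/
noncomputable def gk (k : ℕ) (x : ℝ) : ℝ :=
  if x = 1 then 1
  else if ∀ n, digit k n x = 0 ∨ digit k n x = (k : ℤ) - 1 then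
    ∑' n : ℕ, (digit k n x : ℝ) / (((k : ℝ) - 1) * 2 ^ (n + 1))
  else
    (∑ n ∈ Finset.range (sInf {n : ℕ | ¬(digit k n x = 0 ∨ digit k n x = (k : ℤ) - 1)}),
      (digit k n x : ℝ) / (((k : ℝ) - 1) * 2 ^ (n + 1))) +
    1 / 2 ^ (sInf {n : ℕ | ¬(digit k n x = 0 ∨ digit k n x = (k : ℤ) - 1)} + 1)

/-- The Thue–Morse sequence: parity of the number of 1s in the binary expansion. -/
def tm (n : ℕ) : ℕ := (Nat.digits 2 n).sum % 2

/-! ### Auxiliary lemmas -/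

section Aux

variable {k : ℕ}

lemma aux_kpos (hk : 3 ≤ k) : 0 < k := by omega

lemma aux_kR1 (hk : 3 ≤ k) : (1:ℝ) < (k:ℝ) - 1 := by
  have : (3:ℝ) ≤ (k:ℝ) := by exact_mod_cast hk
  linarith

lemma digit_nonneg (hk : 0 < k) (n : ℕ) (x : ℝ) : 0 ≤ digit k n x :=
  Int.emod_nonneg _ (by exact_mod_cast hk.ne')

lemma digit_lt (hk : 0 < k) (n : ℕ) (x : ℝ) : digit k n x < k :=
  Int.emod_lt_of_pos _ (by exact_mod_cast hk)

lemma digit_shift (k : ℕ) (n : ℕ) (x : ℝ) :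
    digit k n (Int.fract ((k : ℝ) * x)) = digit k (n + 1) x := by
  unfold digit
  rw [Int.fract]
  have h : (k : ℝ) ^ (n + 1) * ((k : ℝ) * x - ⌊(k : ℝ) * x⌋)
      = (k : ℝ) ^ (n + 1 + 1) * x - ((k : ℤ) * ((k:ℤ) ^ n * ⌊(k : ℝ) * x⌋) : ℤ) := by
    push_cast; ring
  rw [h, Int.floor_sub_intCast]
  have h2 := Int.add_mul_emod_self_left (a := ⌊(k : ℝ) ^ (n + 1 + 1) * x⌋) (b := (k:ℤ))
    (c := -((k:ℤ) ^ n * ⌊(k : ℝ) * x⌋))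
  simpa [sub_eq_add_neg, mul_neg] using h2

lemma floor_decomp (k : ℕ) (n : ℕ) (x : ℝ) :
    ⌊(k : ℝ) ^ (n+1) * x⌋ = (k:ℤ)^n * ⌊(k:ℝ) * x⌋ + ⌊(k:ℝ)^n * Int.fract ((k:ℝ)*x)⌋ := by
  have h : (k:ℝ)^n * Int.fract ((k:ℝ)*x) = (k:ℝ)^(n+1)*x - (((k:ℤ)^n * ⌊(k:ℝ)*x⌋ : ℤ) : ℝ) := by
    rw [Int.fract]; push_cast; ring
  rw [h, Int.floor_sub_intCast]; ring

noncomputable def F (k : ℕ) (x : ℝ) (n : ℕ) : ℝ :=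
  (digit k n x : ℝ) / (((k : ℝ) - 1) * 2 ^ (n + 1))

lemma F_nonneg (hk : 3 ≤ k) (x : ℝ) (n : ℕ) : 0 ≤ F k x n := by
  have h1 : (0:ℝ) ≤ (digit k n x : ℝ) := by exact_mod_cast digit_nonneg (aux_kpos hk) n x
  have h2 : (0:ℝ) < ((k : ℝ) - 1) * 2 ^ (n + 1) := by
    have := aux_kR1 hk; positivity
  exact div_nonneg h1 h2.le

lemma F_le (hk : 3 ≤ k) (x : ℝ) (n : ℕ) : F k x n ≤ (1/2) ^ (n + 1) := by
  have hd : (digit k n x : ℝ) ≤ (k : ℝ) - 1 := by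
    have h : digit k n x ≤ (k:ℤ) - 1 := by
      have := digit_lt (aux_kpos hk) n x; omega
    exact_mod_cast h
  have hk1 : (0:ℝ) < (k:ℝ) - 1 := by have := aux_kR1 hk; linarith
  have e : ((k:ℝ)-1)/(((k:ℝ)-1)*2^(n+1)) = (1/2)^(n+1) := by
    rw [div_mul_eq_div_div, div_self hk1.ne', one_div, ← inv_pow, one_div]
  calc F k x n ≤ ((k:ℝ)-1)/(((k:ℝ)-1)*2^(n+1)) := by
        unfold F; gcongr
    _ = (1/2)^(n+1) := e

lemma summable_half : Summable (fun n : ℕ => (1/2:ℝ) ^ (n + 1)) := by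
  apply Summable.comp_injective (summable_geometric_of_lt_one (by norm_num) (by norm_num))
  exact add_left_injective 1

lemma summable_F (hk : 3 ≤ k) (x : ℝ) : Summable (F k x) :=
  Summable.of_nonneg_of_le (F_nonneg hk x) (F_le hk x) summable_half

lemma tsum_half : ∑' n : ℕ, (1/2:ℝ) ^ (n + 1) = 1 := by
  have h := tsum_geometric_of_lt_one (by norm_num : (0:ℝ) ≤ 1/2) (by norm_num : (1/2:ℝ) < 1)
  calc ∑' n:ℕ, (1/2:ℝ)^(n+1) = ∑' n:ℕ, (1/2:ℝ)^n * (1/2) := by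
        apply tsum_congr; intro n; rw [pow_succ]
    _ = (∑' n:ℕ, (1/2:ℝ)^n) * (1/2) := tsum_mul_right
    _ = 1 := by rw [h]; norm_num

lemma tsum_F_le (hk : 3 ≤ k) (x : ℝ) : ∑' n, F k x n ≤ 1 := by
  calc ∑' n, F k x n ≤ ∑' n : ℕ, (1/2:ℝ)^(n+1) :=
        Summable.tsum_le_tsum (F_le hk x) (summable_F hk x) summable_half
    _ = 1 := tsum_half

lemma sum_half (N : ℕ) : ∑ n ∈ Finset.range N, (1/2:ℝ)^(n+1) = 1 - (1/2)^N := by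
  induction N with
  | zero => simp
  | succ m ih => rw [Finset.sum_range_succ, ih, pow_succ]; ring

lemma gk_one (k : ℕ) : gk k 1 = 1 := by
  unfold gk; rw [if_pos rfl]

lemma gk_nonneg (hk : 3 ≤ k) {x : ℝ} (hx : x ∈ Set.Ico (0:ℝ) 1) : 0 ≤ gk k x := by
  have hx1 : x ≠ 1 := ne_of_lt hx.2
  unfold gk
  rw [if_neg hx1]
  split_ifs with h
  · exact tsum_nonneg (F_nonneg hk x)
  · apply add_nonneg
    · exact Finset.sum_nonneg (fun n _ => F_nonneg hk x n)
    · positivity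

lemma gk_le_one (hk : 3 ≤ k) {x : ℝ} (hx : x ∈ Set.Ico (0:ℝ) 1) : gk k x ≤ 1 := by
  have hx1 : x ≠ 1 := ne_of_lt hx.2
  unfold gk
  rw [if_neg hx1]
  split_ifs with h
  · exact tsum_F_le hk x
  · set N := sInf {n : ℕ | ¬(digit k n x = 0 ∨ digit k n x = (k:ℤ)-1)} with hN
    have h1 : ∑ n ∈ Finset.range N, (digit k n x : ℝ) / (((k : ℝ) - 1) * 2 ^ (n + 1))
        ≤ ∑ n ∈ Finset.range N, (1/2:ℝ)^(n+1) :=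
      Finset.sum_le_sum (fun n _ => F_le hk x n)
    rw [sum_half] at h1
    have h2 : (1:ℝ) / 2 ^ (N+1) = (1/2:ℝ)^(N+1) := by
      rw [one_div, ← inv_pow, one_div]
    have h3 : (1/2:ℝ)^(N+1) = (1/2)^N * (1/2) := pow_succ _ _
    have h4 : (0:ℝ) ≤ (1/2:ℝ)^N := by positivity
    rw [h2]
    linarith

lemma gk_rec (hk : 3 ≤ k) {x : ℝ} (hx : x ∈ Set.Ico (0:ℝ) 1) :
    gk k x = if digit k 0 x = 0 ∨ digit k 0 x = (k:ℤ) - 1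
      then (digit k 0 x : ℝ) / (((k:ℝ)-1) * 2) + gk k (Int.fract ((k:ℝ)*x)) / 2
      else 1/2 := by
  classical
  set y := Int.fract ((k:ℝ)*x) with hy
  have hy1 : y ≠ 1 := ne_of_lt (Int.fract_lt_one _)
  have hx1 : x ≠ 1 := ne_of_lt hx.2
  have hshift : ∀ n, digit k n y = digit k (n+1) x := fun n => digit_shift k n x
  have hF0 : F k x 0 = (digit k 0 x : ℝ) / (((k:ℝ)-1) * 2) := by
    unfold F; norm_num
  have hFsh : ∀ n, F k x (n+1) = F k y n / 2 := by
    intro n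
    unfold F
    rw [hshift n, div_div]
    congr 1
    ring
  by_cases h0 : digit k 0 x = 0 ∨ digit k 0 x = (k:ℤ)-1
  · rw [if_pos h0]
    by_cases hall : ∀ n, digit k n x = 0 ∨ digit k n x = (k:ℤ)-1
    · have hally : ∀ n, digit k n y = 0 ∨ digit k n y = (k:ℤ)-1 := fun n => by
        rw [hshift]; exact hall (n+1)
      unfold gk
      rw [if_neg hx1, if_pos hall, if_neg hy1, if_pos hally]
      have h1 : ∑' n : ℕ, (digit k n x : ℝ) / (((k : ℝ) - 1) * 2 ^ (n + 1))
          = ∑' n, F k x n := rfl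
      have h2 : ∑' n : ℕ, (digit k n y : ℝ) / (((k : ℝ) - 1) * 2 ^ (n + 1))
          = ∑' n, F k y n := rfl
      rw [h1, h2, Summable.tsum_eq_zero_add (summable_F hk x), hF0]
      congr 1
      calc ∑' n, F k x (n+1) = ∑' n, F k y n / 2 := tsum_congr hFsh
        _ = (∑' n, F k y n) / 2 := by rw [tsum_div_const]
    · have hbadx : {n : ℕ | ¬(digit k n x = 0 ∨ digit k n x = (k:ℤ)-1)}.Nonempty := by
        rw [Set.nonempty_def]; push_neg at hall ⊢
        obtain ⟨n, hn⟩ := hall; exact ⟨n, hn⟩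
      have hnally : ¬ ∀ n, digit k n y = 0 ∨ digit k n y = (k:ℤ)-1 := by
        intro hy'
        apply hall
        intro n
        cases n with
        | zero => exact h0
        | succ m => rw [← hshift m]; exact hy' m
      have hbady : {n : ℕ | ¬(digit k n y = 0 ∨ digit k n y = (k:ℤ)-1)}.Nonempty := by
        rw [Set.nonempty_def]; push_neg at hnally ⊢
        obtain ⟨n, hn⟩ := hnally; exact ⟨n, hn⟩
      set N := sInf {n : ℕ | ¬(digit k n y = 0 ∨ digit k n y = (k:ℤ)-1)} with hN
      have hNmem : ¬(digit k N y = 0 ∨ digit k N y = (k:ℤ)-1) := Nat.sInf_mem hbady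
      have hsx : sInf {n : ℕ | ¬(digit k n x = 0 ∨ digit k n x = (k:ℤ)-1)} = N + 1 := by
        apply le_antisymm
        · apply Nat.sInf_le
          show ¬(digit k (N+1) x = 0 ∨ digit k (N+1) x = (k:ℤ)-1)
          rw [← hshift N]; exact hNmem
        · apply le_csInf hbadx
          intro m hm
          match m with
          | 0 => exact absurd h0 hm
          | m'+1 =>
            have h' : ¬(digit k m' y = 0 ∨ digit k m' y = (k:ℤ)-1) := by
              rw [hshift m']; exact hm
            have h2 : m' ∈ {n : ℕ | ¬(digit k n y = 0 ∨ digit k n y = (k:ℤ)-1)} := h'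
            have := Nat.sInf_le h2
            omega
      unfold gk
      rw [if_neg hx1, if_neg hall, if_neg hy1, if_neg hnally, hsx, ← hN]
      have hsum : ∑ n ∈ Finset.range (N+1),
          (digit k n x : ℝ) / (((k : ℝ) - 1) * 2 ^ (n + 1))
          = ∑ n ∈ Finset.range (N+1), F k x n := rfl
      have hsumy : ∑ n ∈ Finset.range N,
          (digit k n y : ℝ) / (((k : ℝ) - 1) * 2 ^ (n + 1))
          = ∑ n ∈ Finset.range N, F k y n := rfl
      rw [hsum, hsumy, Finset.sum_range_succ']
      have h3 : ∑ i ∈ Finset.range N, F k x (i+1) = (∑ i ∈ Finset.range N, F k y i) / 2 := by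
        rw [Finset.sum_div]
        exact Finset.sum_congr rfl (fun i _ => hFsh i)
      rw [h3, hF0]
      have hp : (1:ℝ) / 2 ^ (N + 1 + 1) = (1 / 2 ^ (N+1)) / 2 := by
        rw [pow_succ]; ring
      rw [hp]
      ring
  · rw [if_neg h0]
    have hall : ¬ ∀ n, digit k n x = 0 ∨ digit k n x = (k:ℤ)-1 := fun h => h0 (h 0)
    have hs0 : sInf {n : ℕ | ¬(digit k n x = 0 ∨ digit k n x = (k:ℤ)-1)} = 0 :=
      Nat.sInf_eq_zero.mpr (Or.inl h0)
    unfold gk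
    rw [if_neg hx1, if_neg hall, hs0]
    norm_num

/-! ### The step function `phi` -/

noncomputable def phi (k : ℕ) : ℕ → ℤ → ℝ
  | 0, _ => 0
  | (n+1), j =>
    if j / (k:ℤ)^n = 0 then phi k n (j % (k:ℤ)^n) / 2
    else if j / (k:ℤ)^n = (k:ℤ) - 1 then 1/2 + phi k n (j % (k:ℤ)^n) / 2
    else 1/2

lemma phi_succ (k : ℕ) (n : ℕ) (j : ℤ) : phi k (n+1) j =
    if j / (k:ℤ)^n = 0 then phi k n (j % (k:ℤ)^n) / 2
    else if j / (k:ℤ)^n = (k:ℤ) - 1 then 1/2 + phi k n (j % (k:ℤ)^n) / 2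
    else 1/2 := rfl

lemma phi_zero (k : ℕ) (n : ℕ) : phi k n 0 = 0 := by
  induction n with
  | zero => rfl
  | succ m ih => simp [phi_succ, Int.zero_ediv, Int.zero_emod, ih]

lemma phi_top (hk : 3 ≤ k) (n : ℕ) : phi k n ((k:ℤ)^n - 1) = 1 - (1/2)^n := by
  induction n with
  | zero => simp [phi]
  | succ m ih =>
    have hkn : (0:ℤ) < (k:ℤ)^m := by positivity
    have hdecomp : (k:ℤ)^(m+1) - 1 = ((k:ℤ)^m - 1) + ((k:ℤ) - 1) * (k:ℤ)^m := by ring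
    have hr : (0:ℤ) ≤ (k:ℤ)^m - 1 := by omega
    have hr2 : (k:ℤ)^m - 1 < (k:ℤ)^m := by omega
    have hdiv : ((k:ℤ)^(m+1) - 1) / (k:ℤ)^m = (k:ℤ) - 1 := by
      rw [hdecomp, Int.add_mul_ediv_right _ _ hkn.ne',
        Int.ediv_eq_zero_of_lt hr hr2, zero_add]
    have hmod : ((k:ℤ)^(m+1) - 1) % (k:ℤ)^m = (k:ℤ)^m - 1 := by
      rw [hdecomp, Int.add_mul_emod_self_right, Int.emod_eq_of_lt hr hr2]
    have hk3 : (3:ℤ) ≤ (k:ℤ) := by exact_mod_cast hk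
    have hk1 : (k:ℤ) - 1 ≠ 0 := by omega
    rw [phi_succ, hdiv, if_neg hk1, if_pos rfl, hmod, ih, pow_succ]
    ring

lemma phi_bounds (k : ℕ) (n : ℕ) (j : ℤ) : 0 ≤ phi k n j ∧ phi k n j ≤ 1 - (1/2:ℝ)^n := by
  induction n generalizing j with
  | zero => simp [phi]
  | succ m ih =>
    have h2 : (1/2:ℝ)^(m+1) ≤ 1/2 := by
      calc (1/2:ℝ)^(m+1) ≤ (1/2:ℝ)^1 := by
            apply pow_le_pow_of_le_one (by norm_num) (by norm_num); omega
        _ = 1/2 := pow_one _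
    have hm := ih (j % (k:ℤ)^m)
    have hp : (0:ℝ) < (1/2:ℝ)^(m+1) := by positivity
    have hps : (1/2:ℝ)^(m+1) = (1/2:ℝ)^m * (1/2) := pow_succ _ _
    rw [phi_succ]
    split_ifs <;> constructor <;> linarith [hm.1, hm.2]

lemma phi_step (hk : 3 ≤ k) (n : ℕ) :
    ∀ j : ℤ, 0 ≤ j → j + 1 < (k:ℤ)^n →
      phi k n j ≤ phi k n (j+1) ∧ phi k n (j+1) ≤ phi k n j + (1/2:ℝ)^n := by
  have hk3 : (3:ℤ) ≤ (k:ℤ) := by exact_mod_cast hk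
  induction n with
  | zero => intro j hj hlt; simp at hlt; omega
  | succ m ih =>
    intro j hj hlt
    have hkn : (0:ℤ) < (k:ℤ)^m := by positivity
    set d := j / (k:ℤ)^m with hd
    set r := j % (k:ℤ)^m with hr
    have hdecomp : j = (k:ℤ)^m * d + r := (Int.mul_ediv_add_emod j _).symm
    have hr0 : 0 ≤ r := Int.emod_nonneg j hkn.ne'
    have hrlt : r < (k:ℤ)^m := Int.emod_lt_of_pos j hkn
    have hd0 : 0 ≤ d := Int.ediv_nonneg hj hkn.le
    have hdlt : d < (k:ℤ) := by
      by_contra hcon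
      push_neg at hcon
      have h1 : (k:ℤ)^m * (k:ℤ) ≤ (k:ℤ)^m * d :=
        mul_le_mul_of_nonneg_left hcon hkn.le
      have h2 : (k:ℤ)^(m+1) = (k:ℤ)^m * (k:ℤ) := pow_succ _ _
      omega
    have hps : (1/2:ℝ)^(m+1) = (1/2:ℝ)^m * (1/2) := pow_succ _ _
    rcases lt_or_eq_of_le (by omega : r + 1 ≤ (k:ℤ)^m) with hcase | hcase
    · -- no carry
      have hj1 : j + 1 = (r + 1) + (k:ℤ)^m * d := by omega
      have hdiv1 : (j+1) / (k:ℤ)^m = d := by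
        rw [hj1, Int.add_mul_ediv_left _ _ hkn.ne',
          Int.ediv_eq_zero_of_lt (by omega) hcase, zero_add]
      have hmod1 : (j+1) % (k:ℤ)^m = r + 1 := by
        rw [hj1, Int.add_mul_emod_self_left, Int.emod_eq_of_lt (by omega) hcase]
      have hih := ih r hr0 hcase
      rw [phi_succ, phi_succ, hdiv1, ← hd, ← hr, hmod1]
      split_ifs <;> constructor <;> linarith [hih.1, hih.2]
    · -- carry
      have hma : (k:ℤ)^m * (d+1) = (k:ℤ)^m * d + (k:ℤ)^m := by ring
      have hj1 : j + 1 = (k:ℤ)^m * (d+1) := by omega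
      have hdiv1 : (j+1) / (k:ℤ)^m = d + 1 := by
        rw [hj1, mul_comm, Int.mul_ediv_cancel _ hkn.ne']
      have hmod1 : (j+1) % (k:ℤ)^m = 0 := by
        rw [hj1, Int.mul_emod_right]
      have hd1lt : d + 1 < (k:ℤ) := by
        have h2 : (k:ℤ)^(m+1) = (k:ℤ)^m * (k:ℤ) := pow_succ _ _
        by_contra hcon
        push_neg at hcon
        have h1 : (k:ℤ)^m * (k:ℤ) ≤ (k:ℤ)^m * (d+1) :=
          mul_le_mul_of_nonneg_left hcon hkn.le
        omega
      have hrtop : r = (k:ℤ)^m - 1 := by omega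
      rw [phi_succ, phi_succ, hdiv1, ← hd, ← hr, hmod1, hrtop, phi_zero, phi_top hk]
      have hbm := phi_bounds k m ((k:ℤ)^m - 1)
      have hpm : (0:ℝ) ≤ (1/2:ℝ)^m := by positivity
      rcases eq_or_ne d 0 with hd00 | hdne
      · rw [if_pos hd00, if_neg (by omega : d + 1 ≠ 0), if_neg (by omega : d + 1 ≠ (k:ℤ) - 1)]
        constructor <;> linarith
      · have hdne2 : d ≠ (k:ℤ) - 1 := by omega
        rw [if_neg hdne, if_neg hdne2, if_neg (by omega : d + 1 ≠ 0)]
        rcases eq_or_ne (d+1) ((k:ℤ)-1) with he | hne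
        · rw [if_pos he]; constructor <;> linarith
        · rw [if_neg hne]; constructor <;> linarith

lemma digit_zero_floor (hk : 3 ≤ k) {x : ℝ} (hx : x ∈ Set.Ico (0:ℝ) 1) :
    digit k 0 x = ⌊(k:ℝ) * x⌋ := by
  have hk3 : (3:ℝ) ≤ (k:ℝ) := by exact_mod_cast hk
  unfold digit
  rw [pow_one]
  apply Int.emod_eq_of_lt
  · exact Int.floor_nonneg.mpr (mul_nonneg (by linarith) hx.1)
  · rw [Int.floor_lt]
    push_cast
    calc (k:ℝ)*x < (k:ℝ)*1 := mul_lt_mul_of_pos_left hx.2 (by linarith)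
      _ = k := mul_one _

lemma gk_floor_bounds (hk : 3 ≤ k) :
    ∀ n : ℕ, ∀ x : ℝ, x ∈ Set.Ico (0:ℝ) 1 →
      phi k n ⌊(k:ℝ)^n * x⌋ ≤ gk k x ∧ gk k x ≤ phi k n ⌊(k:ℝ)^n * x⌋ + (1/2:ℝ)^n := by
  have hk3 : (3:ℝ) ≤ (k:ℝ) := by exact_mod_cast hk
  have hk3' : (3:ℤ) ≤ (k:ℤ) := by exact_mod_cast hk
  intro n
  induction n with
  | zero =>
    intro x hx
    have h0 : phi k 0 ⌊(k:ℝ)^0 * x⌋ = 0 := rfl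
    rw [h0, pow_zero]
    exact ⟨gk_nonneg hk hx, by simpa using gk_le_one hk hx⟩
  | succ n IH =>
    intro x hx
    set y := Int.fract ((k:ℝ)*x) with hy
    have hy01 : y ∈ Set.Ico (0:ℝ) 1 := ⟨Int.fract_nonneg _, Int.fract_lt_one _⟩
    have hIH := IH y hy01
    have hkn : (0:ℤ) < (k:ℤ)^n := by positivity
    set d := ⌊(k:ℝ) * x⌋ with hdd
    set r := ⌊(k:ℝ)^n * y⌋ with hrr
    set j := ⌊(k:ℝ)^(n+1) * x⌋ with hjj
    have hdecomp : j = (k:ℤ)^n * d + r := floor_decomp k n x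
    have hr0 : 0 ≤ r := Int.floor_nonneg.mpr (mul_nonneg (by positivity) hy01.1)
    have hrlt : r < (k:ℤ)^n := by
      rw [hrr, Int.floor_lt]
      push_cast
      calc (k:ℝ)^n * y < (k:ℝ)^n * 1 := mul_lt_mul_of_pos_left hy01.2 (by positivity)
        _ = (k:ℝ)^n := mul_one _
    have hdiv : j / (k:ℤ)^n = d := by
      rw [show j = r + (k:ℤ)^n * d from by omega, Int.add_mul_ediv_left _ _ hkn.ne',
        Int.ediv_eq_zero_of_lt hr0 hrlt, zero_add]
    have hmod : j % (k:ℤ)^n = r := by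
      rw [show j = r + (k:ℤ)^n * d from by omega, Int.add_mul_emod_self_left,
        Int.emod_eq_of_lt hr0 hrlt]
    have hd0x : digit k 0 x = d := digit_zero_floor hk hx
    have hrec := gk_rec hk hx
    rw [hd0x] at hrec
    have hps : (1/2:ℝ)^(n+1) = (1/2:ℝ)^n * (1/2) := pow_succ _ _
    rw [phi_succ, hdiv, hmod]
    by_cases hgood : d = 0 ∨ d = (k:ℤ) - 1
    · rw [if_pos hgood] at hrec
      rcases hgood with hg | hg
      · rw [if_pos hg]
        rw [hg] at hrec
        have hrec' : gk k x = gk k y / 2 := by rw [hrec]; norm_num [hy]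
        rw [hrec']
        constructor <;> linarith [hIH.1, hIH.2]
      · rw [if_neg (by omega : d ≠ 0), if_pos hg]
        rw [hg] at hrec
        have hne : ((k:ℝ) - 1) ≠ 0 := by
          have := aux_kR1 hk; linarith
        have hcast : (((k:ℤ) - 1 : ℤ) : ℝ) = (k:ℝ) - 1 := by push_cast; ring
        have hrec' : gk k x = 1/2 + gk k y / 2 := by
          rw [hrec, hcast, div_mul_eq_div_div, div_self hne]
        rw [hrec']
        constructor <;> linarith [hIH.1, hIH.2]
    · rw [if_neg hgood] at hrec
      push_neg at hgood
      rw [if_neg hgood.1, if_neg hgood.2, hrec]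
      have : (0:ℝ) < (1/2:ℝ)^(n+1) := by positivity
      constructor <;> linarith

end Aux

/-- `g_k` is continuous on `[0,1]`. -/
theorem stmt7 (k : ℕ) (hk : 3 ≤ k) :
    ContinuousOn (gk k) (Set.Icc (0 : ℝ) 1) := by
  have hk3 : (3:ℝ) ≤ (k:ℝ) := by exact_mod_cast hk
  have hk3' : (3:ℤ) ≤ (k:ℤ) := by exact_mod_cast hk
  -- key estimate
  have key : ∀ n : ℕ, ∀ x ∈ Set.Icc (0:ℝ) 1, ∀ y ∈ Set.Icc (0:ℝ) 1,
      y ≤ x → x - y < ((k:ℝ)^n)⁻¹ → |gk k x - gk k y| ≤ 2 * (1/2:ℝ)^n := by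
    intro n x hx y hy hyx hcl
    have hknR : (0:ℝ) < (k:ℝ)^n := by positivity
    have hknZ : (0:ℤ) < (k:ℤ)^n := by positivity
    have hcast : (((k:ℤ)^n : ℤ) : ℝ) = (k:ℝ)^n := by push_cast; ring
    have hhalf : (0:ℝ) ≤ (1/2:ℝ)^n := by positivity
    rcases eq_or_lt_of_le hx.2 with hx1 | hx1
    · -- x = 1
      have hx1' : x = 1 := hx1
      have hgx : gk k x = 1 := by rw [hx1']; exact gk_one k
      rcases eq_or_lt_of_le hy.2 with hy1 | hy1
      · rw [hgx, hy1, gk_one]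
        simpa using (by positivity : (0:ℝ) ≤ 2 * (1/2:ℝ)^n)
      · have hy01 : y ∈ Set.Ico (0:ℝ) 1 := ⟨hy.1, hy1⟩
        set jy := ⌊(k:ℝ)^n * y⌋ with hjy
        have hjylt : jy < (k:ℤ)^n := by
          rw [hjy, Int.floor_lt, hcast]
          calc (k:ℝ)^n * y < (k:ℝ)^n * 1 := mul_lt_mul_of_pos_left hy1 hknR
            _ = (k:ℝ)^n := mul_one _
        have hjyge : (k:ℤ)^n - 1 ≤ jy := by
          rw [hjy]
          apply Int.le_floor.mpr
          push_cast
          have h1 : 1 - ((k:ℝ)^n)⁻¹ < y := by rw [hx1'] at hcl; linarith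
          have h2 : (k:ℝ)^n * (1 - ((k:ℝ)^n)⁻¹) = (k:ℝ)^n - 1 := by
            field_simp
          calc (k:ℝ)^n - 1 = (k:ℝ)^n * (1 - ((k:ℝ)^n)⁻¹) := h2.symm
            _ ≤ (k:ℝ)^n * y := by
                apply mul_le_mul_of_nonneg_left (le_of_lt h1) hknR.le
        have hjyeq : jy = (k:ℤ)^n - 1 := by omega
        have hb := gk_floor_bounds hk n y hy01
        rw [← hjy, hjyeq, phi_top hk] at hb
        rw [hgx]
        rw [abs_le]
        constructor <;> linarith [hb.1, hb.2]
    · -- x < 1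
      have hx01 : x ∈ Set.Ico (0:ℝ) 1 := ⟨hx.1, hx1⟩
      have hy01 : y ∈ Set.Ico (0:ℝ) 1 := ⟨hy.1, lt_of_le_of_lt hyx hx1⟩
      set jx := ⌊(k:ℝ)^n * x⌋ with hjx
      set jy := ⌊(k:ℝ)^n * y⌋ with hjy
      have hjylejx : jy ≤ jx := by
        apply Int.floor_le_floor
        apply mul_le_mul_of_nonneg_left hyx hknR.le
      have hjy0 : 0 ≤ jy := Int.floor_nonneg.mpr (mul_nonneg hknR.le hy.1)
      have hjxlt : jx < (k:ℤ)^n := by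
        rw [hjx, Int.floor_lt, hcast]
        calc (k:ℝ)^n * x < (k:ℝ)^n * 1 := mul_lt_mul_of_pos_left hx1 hknR
          _ = (k:ℝ)^n := mul_one _
      have hjxle : jx ≤ jy + 1 := by
        have h1 : (k:ℝ)^n * x < (k:ℝ)^n * y + 1 := by
          have h2 : (k:ℝ)^n * (x - y) < (k:ℝ)^n * ((k:ℝ)^n)⁻¹ :=
            mul_lt_mul_of_pos_left hcl hknR
          rw [mul_inv_cancel₀ hknR.ne'] at h2
          nlinarith
        have h3 : jx ≤ ⌊(k:ℝ)^n * y + 1⌋ := Int.floor_le_floor h1.le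
        rwa [show ((1:ℝ) = ((1:ℤ):ℝ)) from by norm_num, Int.floor_add_intCast] at h3
      have hbx := gk_floor_bounds hk n x hx01
      have hby := gk_floor_bounds hk n y hy01
      rw [← hjx] at hbx
      rw [← hjy] at hby
      rcases eq_or_lt_of_le hjylejx with heq | hlt
      · rw [← heq] at hbx
        rw [abs_le]
        constructor <;> linarith [hbx.1, hbx.2, hby.1, hby.2]
      · have hjxeq : jx = jy + 1 := by omega
        have hstep := phi_step hk n jy hjy0 (by omega)
        rw [← hjxeq] at hstep
        rw [abs_le]
        constructor <;> linarith [hbx.1, hbx.2, hby.1, hby.2, hstep.1, hstep.2]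
  -- conclude continuity
  rw [Metric.continuousOn_iff]
  intro b hb ε hε
  obtain ⟨n, hn⟩ := exists_pow_lt_of_lt_one (show (0:ℝ) < ε/2 by linarith)
    (show (1/2:ℝ) < 1 by norm_num)
  refine ⟨((k:ℝ)^n)⁻¹, by positivity, ?_⟩
  intro a ha hab
  rw [Real.dist_eq] at hab ⊢
  have h2 : 2 * (1/2:ℝ)^n < ε := by linarith
  rcases le_total a b with h | h
  · have := key n b hb a ha h (by rw [abs_sub_comm] at hab; rw [abs_of_nonneg (by linarith)] at hab; linarith)
    rw [abs_sub_comm]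
    linarith
  · have := key n a ha b hb h (by rw [abs_of_nonneg (by linarith)] at hab; linarith)
    linarith
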